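/- If σ and π are permutations of [n] each admitting a decomposition into at most m strictly decreasing subsequences, then σ and π are 2m-similar. -/

import Mathlib

open Finset

/-- The subsequence of `σ` on index set `A` is order-isomorphic to the
subsequence of `π` on index set `B` (indices taken in increasing order). -/
def OrdIsoOn {n : ℕ} (σ π : Fin n → ℕ) (A B : Finset (Fin n)) : Prop :=
  A.card = B.card ∧
    ∀ (i j : ℕ) (hiA : i < A.card) (hjA : j < A.card) (hiB : i < B.card) (hjB : j < B.card),
      (σ (A.orderIsoOfFin rfl ⟨i, hiA⟩) < σ (A.orderIsoOfFin rfl ⟨j, hjA⟩) ↔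
        π (B.orderIsoOfFin rfl ⟨i, hiB⟩) < π (B.orderIsoOfFin rfl ⟨j, hjB⟩))

/-- `A` and `B` witness an `ℓ`-similarity decomposition of `σ` and `π`. -/
def IsSimilarDecomp {n ℓ : ℕ} (σ π : Equiv.Perm (Fin n)) (A B : Fin ℓ → Finset (Fin n)) : Prop :=
  (∀ i j, i ≠ j → Disjoint (A i) (A j)) ∧ Finset.univ.biUnion A = Finset.univ ∧
  (∀ i j, i ≠ j → Disjoint (B i) (B j)) ∧ Finset.univ.biUnion B = Finset.univ ∧
  ∀ i, OrdIsoOn (fun x => (σ x : ℕ)) (fun x => (π x : ℕ)) (A i) (B i)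

/-- `σ` and `π` are `ℓ`-similar. -/
def PermSimilar (n ℓ : ℕ) (σ π : Equiv.Perm (Fin n)) : Prop :=
  ∃ A B : Fin ℓ → Finset (Fin n), IsSimilarDecomp σ π A B

open Finset

section Aux
variable {n m : ℕ}

/-- prefix sums of part sizes -/
def psum (C : Fin m → Finset (Fin n)) (k : ℕ) : ℕ :=
  ∑ i ∈ univ.filter (fun i : Fin m => (i : ℕ) < k), (C i).card

lemma psum_mono (C : Fin m → Finset (Fin n)) {k l : ℕ} (h : k ≤ l) : psum C k ≤ psum C l := by
  apply Finset.sum_le_sum_of_subset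
  intro i hi
  simp only [mem_filter, mem_univ, true_and] at *
  exact lt_of_lt_of_le hi h

lemma psum_succ (C : Fin m → Finset (Fin n)) (i : Fin m) :
    psum C ((i : ℕ) + 1) = psum C i + (C i).card := by
  unfold psum
  have h : univ.filter (fun j : Fin m => (j : ℕ) < (i : ℕ) + 1)
      = insert i (univ.filter (fun j : Fin m => (j : ℕ) < (i : ℕ))) := by
    ext j
    simp [Nat.lt_succ_iff_lt_or_eq, Fin.ext_iff, or_comm]
    rw [Fin.le_iff_val_le_val, Fin.lt_iff_val_lt_val]; omega
  rw [h, Finset.sum_insert (by simp)]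
  ring

lemma psum_total (C : Fin m → Finset (Fin n))
    (hdisj : ∀ i j, i ≠ j → Disjoint (C i) (C j))
    (hcov : Finset.univ.biUnion C = Finset.univ) : psum C m = n := by
  have h1 : univ.filter (fun j : Fin m => (j : ℕ) < m) = univ := by
    ext j; simp [j.isLt]
  rw [psum, h1]
  have h2 := Finset.card_biUnion (s := (univ : Finset (Fin m))) (t := C)
    (fun i _ j _ hij => hdisj i j hij)
  rw [← h2, hcov, card_univ, Fintype.card_fin]

/-- the part an element belongs to -/
noncomputable def pt (C : Fin m → Finset (Fin n))
    (hcov : Finset.univ.biUnion C = Finset.univ) (x : Fin n) : Fin m :=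
  Classical.choose (show ∃ i, x ∈ C i by
    have h : x ∈ Finset.univ.biUnion C := by rw [hcov]; exact mem_univ x
    simpa using h)

lemma pt_mem (C : Fin m → Finset (Fin n)) (hcov : Finset.univ.biUnion C = Finset.univ)
    (x : Fin n) : x ∈ C (pt C hcov x) :=
  Classical.choose_spec (show ∃ i, x ∈ C i by
    have h : x ∈ Finset.univ.biUnion C := by rw [hcov]; exact mem_univ x
    simpa using h)

lemma pt_eq (C : Fin m → Finset (Fin n))
    (hdisj : ∀ i j, i ≠ j → Disjoint (C i) (C j))
    (hcov : Finset.univ.biUnion C = Finset.univ) {x : Fin n} {i : Fin m}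
    (hx : x ∈ C i) : pt C hcov x = i := by
  by_contra h
  exact Finset.disjoint_left.mp (hdisj _ _ h) (pt_mem C hcov x) hx

/-- rank within a finset -/
def rkIn (s : Finset (Fin n)) (x : Fin n) : ℕ := (s.filter (fun y => y < x)).card

lemma rkIn_lt {s : Finset (Fin n)} {x : Fin n} (hx : x ∈ s) : rkIn s x < s.card := by
  apply card_lt_card
  rw [Finset.filter_ssubset]
  exact ⟨x, hx, lt_irrefl x⟩

lemma rkIn_lt_rkIn {s : Finset (Fin n)} {x y : Fin n} (hx : x ∈ s) (hxy : x < y) :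
    rkIn s x < rkIn s y := by
  unfold rkIn
  apply card_lt_card
  constructor
  · intro t ht
    simp only [mem_filter] at *
    exact ⟨ht.1, lt_trans ht.2 hxy⟩
  · intro hsub
    have : x ∈ s.filter (fun t => t < x) := hsub (mem_filter.mpr ⟨hx, hxy⟩)
    simp at this

lemma rkIn_injOn {s : Finset (Fin n)} {x y : Fin n} (hx : x ∈ s) (hy : y ∈ s)
    (h : rkIn s x = rkIn s y) : x = y := by
  rcases lt_trichotomy x y with hlt | heq | hlt
  · exact absurd h (Nat.ne_of_lt (rkIn_lt_rkIn hx hlt))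
  · exact heq
  · exact absurd h.symm (Nat.ne_of_lt (rkIn_lt_rkIn hy hlt))

/-- global position -/
noncomputable def pos (C : Fin m → Finset (Fin n))
    (hcov : Finset.univ.biUnion C = Finset.univ) (x : Fin n) : ℕ :=
  psum C (pt C hcov x) + rkIn (C (pt C hcov x)) x

lemma pos_lower (C : Fin m → Finset (Fin n)) (hcov : Finset.univ.biUnion C = Finset.univ)
    (x : Fin n) : psum C (pt C hcov x) ≤ pos C hcov x := Nat.le_add_right _ _

lemma pos_upper (C : Fin m → Finset (Fin n)) (hcov : Finset.univ.biUnion C = Finset.univ)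
    (x : Fin n) : pos C hcov x < psum C ((pt C hcov x : ℕ) + 1) := by
  rw [psum_succ]
  exact Nat.add_lt_add_left (rkIn_lt (pt_mem C hcov x)) _

lemma pos_lt (C : Fin m → Finset (Fin n))
    (hdisj : ∀ i j, i ≠ j → Disjoint (C i) (C j))
    (hcov : Finset.univ.biUnion C = Finset.univ) (x : Fin n) : pos C hcov x < n := by
  calc pos C hcov x < psum C ((pt C hcov x : ℕ) + 1) := pos_upper C hcov x
    _ ≤ psum C m := psum_mono C (pt C hcov x).isLt
    _ = n := psum_total C hdisj hcov

lemma pos_injective (C : Fin m → Finset (Fin n))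
    (hdisj : ∀ i j, i ≠ j → Disjoint (C i) (C j))
    (hcov : Finset.univ.biUnion C = Finset.univ) :
    Function.Injective (pos C hcov) := by
  have key : ∀ x y : Fin n, pos C hcov x = pos C hcov y → pt C hcov x < pt C hcov y → False := by
    intro x y hxy hlt
    have h1 : pos C hcov x < psum C (pt C hcov y) :=
      lt_of_lt_of_le (pos_upper C hcov x) (psum_mono C hlt)
    rw [hxy] at h1
    exact absurd (pos_lower C hcov y) (not_le.mpr h1)
  intro x y hxy
  have hpt : pt C hcov x = pt C hcov y := by
    rcases lt_trichotomy (pt C hcov x) (pt C hcov y) with h | h | h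
    · exact absurd (key x y hxy h) (fun h => h)
    · exact h
    · exact absurd (key y x hxy.symm h) (fun h => h)
  unfold pos at hxy
  rw [hpt] at hxy
  have hrk := Nat.add_left_cancel hxy
  exact rkIn_injOn (hpt ▸ pt_mem C hcov x) (pt_mem C hcov y) hrk

lemma image_pos (C : Fin m → Finset (Fin n))
    (hdisj : ∀ i j, i ≠ j → Disjoint (C i) (C j))
    (hcov : Finset.univ.biUnion C = Finset.univ) :
    (univ : Finset (Fin n)).image (pos C hcov) = range n := by
  apply Finset.eq_of_subset_of_card_le
  · intro d hd
    simp only [mem_image] at hd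
    obtain ⟨x, -, rfl⟩ := hd
    exact mem_range.mpr (pos_lt C hdisj hcov x)
  · rw [card_image_of_injective _ (pos_injective C hdisj hcov), card_range, card_univ,
      Fintype.card_fin]

lemma psum_zero (C : Fin m → Finset (Fin n)) : psum C 0 = 0 := by
  unfold psum
  convert Finset.sum_empty
  ext i; simp

/-- which interval a position lies in -/
noncomputable def idxOf (C : Fin m → Finset (Fin n)) (hm : 0 < m) (d : ℕ) : Fin m :=
  (univ.filter (fun i : Fin m => psum C i ≤ d)).max' ⟨⟨0, hm⟩, by simp only [mem_filter, mem_univ, true_and]; exact le_of_eq_of_le (psum_zero C) (Nat.zero_le d)⟩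

lemma idxOf_le (C : Fin m → Finset (Fin n)) (hm : 0 < m) (d : ℕ) :
    psum C (idxOf C hm d) ≤ d := by
  have h := Finset.max'_mem (univ.filter (fun i : Fin m => psum C i ≤ d))
    ⟨⟨0, hm⟩, by simp only [mem_filter, mem_univ, true_and]; exact le_of_eq_of_le (psum_zero C) (Nat.zero_le d)⟩
  simpa [idxOf] using (mem_filter.mp h).2

lemma idxOf_lt_succ (C : Fin m → Finset (Fin n)) (hm : 0 < m) {d : ℕ}
    (hd : d < psum C m) : d < psum C ((idxOf C hm d : ℕ) + 1) := by
  by_contra h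
  push_neg at h
  by_cases hlast : (idxOf C hm d : ℕ) + 1 = m
  · rw [hlast] at h; omega
  · have hlt : (idxOf C hm d : ℕ) + 1 < m := lt_of_le_of_ne (idxOf C hm d).isLt hlast
    have hmem : (⟨(idxOf C hm d : ℕ) + 1, hlt⟩ : Fin m) ∈
        univ.filter (fun i : Fin m => psum C i ≤ d) := by
      simp only [mem_filter, mem_univ, true_and]
      exact h
    have := Finset.le_max' _ _ hmem
    have h2 : ((⟨(idxOf C hm d : ℕ) + 1, hlt⟩ : Fin m) : ℕ) ≤ (idxOf C hm d : ℕ) := this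
    simp at h2

lemma idxOf_eq (C : Fin m → Finset (Fin n)) (hm : 0 < m) {d : ℕ} {i : Fin m}
    (h1 : psum C i ≤ d) (h2 : d < psum C ((i : ℕ) + 1)) : idxOf C hm d = i := by
  rcases lt_trichotomy (idxOf C hm d) i with h | h | h
  · exfalso
    have hmem : i ∈ univ.filter (fun j : Fin m => psum C j ≤ d) := by
      simp only [mem_filter, mem_univ, true_and]; exact h1
    have := Finset.le_max' _ _ hmem
    exact absurd this (not_le.mpr h)
  · exact h
  · exfalso
    have hmono : psum C ((i : ℕ) + 1) ≤ psum C (idxOf C hm d) := psum_mono C h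
    have := idxOf_le C hm d
    omega

lemma idxOf_pos (C : Fin m → Finset (Fin n)) (hm : 0 < m)
    (hcov : Finset.univ.biUnion C = Finset.univ) (x : Fin n) :
    idxOf C hm (pos C hcov x) = pt C hcov x :=
  idxOf_eq C hm (pos_lower C hcov x) (pos_upper C hcov x)

/-- decreasing sequences of equal length are order isomorphic -/
lemma ordIsoOn_of_dec {σ π : Fin n → ℕ} {S T : Finset (Fin n)}
    (hc : S.card = T.card)
    (hS : ∀ p ∈ S, ∀ q ∈ S, p < q → σ q < σ p)
    (hT : ∀ p ∈ T, ∀ q ∈ T, p < q → π q < π p) :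
    OrdIsoOn σ π S T := by
  have key : ∀ (ρ : Fin n → ℕ) (s : Finset (Fin n)),
      (∀ p ∈ s, ∀ q ∈ s, p < q → ρ q < ρ p) → ∀ (i j : ℕ) (hi : i < s.card) (hj : j < s.card),
      (ρ (s.orderIsoOfFin rfl ⟨i, hi⟩) < ρ (s.orderIsoOfFin rfl ⟨j, hj⟩) ↔ j < i) := by
    intro ρ s hs i j hi hj
    constructor
    · intro h
      rcases lt_trichotomy i j with hij | hij | hij
      · exfalso
        have hlt : ((s.orderIsoOfFin rfl ⟨i, hi⟩ : {x // x ∈ s}) : Fin n) <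
            ((s.orderIsoOfFin rfl ⟨j, hj⟩ : {x // x ∈ s}) : Fin n) := by
          have h2 : (⟨i, hi⟩ : Fin s.card) < ⟨j, hj⟩ := hij
          exact (s.orderIsoOfFin rfl).lt_iff_lt.mpr h2
        have := hs _ (s.orderIsoOfFin rfl ⟨i, hi⟩).2 _ (s.orderIsoOfFin rfl ⟨j, hj⟩).2 hlt
        omega
      · exfalso; subst hij; exact lt_irrefl _ h
      · exact hij
    · intro h
      have hlt : ((s.orderIsoOfFin rfl ⟨j, hj⟩ : {x // x ∈ s}) : Fin n) <
          ((s.orderIsoOfFin rfl ⟨i, hi⟩ : {x // x ∈ s}) : Fin n) := by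
        have h2 : (⟨j, hj⟩ : Fin s.card) < ⟨i, hi⟩ := h
        exact (s.orderIsoOfFin rfl).lt_iff_lt.mpr h2
      exact hs _ (s.orderIsoOfFin rfl ⟨j, hj⟩).2 _ (s.orderIsoOfFin rfl ⟨i, hi⟩).2 hlt
  refine ⟨hc, fun i j hiA hjA hiB hjB => ?_⟩
  rw [key σ S hS i j hiA hjA, key π T hT i j hiB hjB]

end Aux

/-- piece index of a position, for the common refinement of two partitions -/
noncomputable def cut {n m : ℕ} (A B : Fin m → Finset (Fin n)) (hm : 0 < m) (d : ℕ) :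
    Fin m ⊕ Fin m :=
  if psum B (idxOf B hm d) ≤ psum A (idxOf A hm d) then Sum.inl (idxOf A hm d)
  else Sum.inr (idxOf B hm d)

theorem similar_of_decreasing_decomps (n m : ℕ) (σ π : Equiv.Perm (Fin n))
    (A B : Fin m → Finset (Fin n))
    (hAdisj : ∀ i j, i ≠ j → Disjoint (A i) (A j)) (hAcov : Finset.univ.biUnion A = Finset.univ)
    (hBdisj : ∀ i j, i ≠ j → Disjoint (B i) (B j)) (hBcov : Finset.univ.biUnion B = Finset.univ)
    (hAdec : ∀ i, ∀ p ∈ A i, ∀ q ∈ A i, p < q → σ q < σ p)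
    (hBdec : ∀ i, ∀ p ∈ B i, ∀ q ∈ B i, p < q → π q < π p) :
    PermSimilar n (2 * m) σ π := by
  classical
  rcases Nat.eq_zero_or_pos n with hn | hn
  · subst hn
    refine ⟨fun _ => ∅, fun _ => ∅, fun i j _ => by simp, by ext x; simp, fun i j _ => by simp,
      by ext x; simp, fun i => ⟨rfl, by intro a b ha; simp at ha⟩⟩
  have hm : 0 < m := by
    rcases Nat.eq_zero_or_pos m with h | h
    · exfalso
      subst h
      have hne : (⟨0, hn⟩ : Fin n) ∈ Finset.univ.biUnion A := by rw [hAcov]; exact mem_univ _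
      simp at hne
    · exact h
  have hAn := psum_total A hAdisj hAcov
  have hBn := psum_total B hBdisj hBcov
  -- the two components of `cut` are constant on fibers of `cut` over positions `< n`
  have keyB : ∀ d d' : ℕ, d < n → psum B (idxOf B hm d) ≤ psum A (idxOf A hm d) →
      psum B (idxOf B hm d') ≤ psum A (idxOf A hm d') →
      idxOf A hm d = idxOf A hm d' → (idxOf B hm d : ℕ) < (idxOf B hm d' : ℕ) → False := by
    intro d d' hd h1 h2 hAe hlt
    have c1 : psum B (idxOf B hm d') ≤ psum A (idxOf A hm d) := by rw [hAe]; exact h2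
    have c2 : psum A (idxOf A hm d) ≤ d := idxOf_le A hm d
    have c3 : d < psum B ((idxOf B hm d : ℕ) + 1) := idxOf_lt_succ B hm (by rw [hBn]; exact hd)
    have c4 : psum B ((idxOf B hm d : ℕ) + 1) ≤ psum B (idxOf B hm d') := psum_mono B hlt
    omega
  have keyA : ∀ d d' : ℕ, d < n → psum A (idxOf A hm d) < psum B (idxOf B hm d) →
      psum A (idxOf A hm d') < psum B (idxOf B hm d') →
      idxOf B hm d = idxOf B hm d' → (idxOf A hm d : ℕ) < (idxOf A hm d' : ℕ) → False := by
    intro d d' hd h1 h2 hBe hlt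
    have c1 : psum A (idxOf A hm d') < psum B (idxOf B hm d) := by rw [hBe]; exact h2
    have c2 : psum B (idxOf B hm d) ≤ d := idxOf_le B hm d
    have c3 : d < psum A ((idxOf A hm d : ℕ) + 1) := idxOf_lt_succ A hm (by rw [hAn]; exact hd)
    have c4 : psum A ((idxOf A hm d : ℕ) + 1) ≤ psum A (idxOf A hm d') := psum_mono A hlt
    omega
  have key : ∀ d d' : ℕ, d < n → d' < n → cut A B hm d = cut A B hm d' →
      idxOf A hm d = idxOf A hm d' ∧ idxOf B hm d = idxOf B hm d' := by
    intro d d' hd hd' hff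
    unfold cut at hff
    by_cases h1 : psum B (idxOf B hm d) ≤ psum A (idxOf A hm d) <;>
      by_cases h2 : psum B (idxOf B hm d') ≤ psum A (idxOf A hm d')
    · rw [if_pos h1, if_pos h2] at hff
      have hAe := Sum.inl.inj hff
      refine ⟨hAe, ?_⟩
      rcases lt_trichotomy (idxOf B hm d : ℕ) (idxOf B hm d' : ℕ) with h | h | h
      · exact (keyB d d' hd h1 h2 hAe h).elim
      · exact Fin.ext h
      · exact (keyB d' d hd' h2 h1 hAe.symm h).elim
    · rw [if_pos h1, if_neg h2] at hff
      exact absurd hff (by simp)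
    · rw [if_neg h1, if_pos h2] at hff
      exact absurd hff (by simp)
    · rw [if_neg h1, if_neg h2] at hff
      have hBe := Sum.inr.inj hff
      push_neg at h1 h2
      refine ⟨?_, hBe⟩
      rcases lt_trichotomy (idxOf A hm d : ℕ) (idxOf A hm d' : ℕ) with h | h | h
      · exact (keyA d d' hd h1 h2 hBe h).elim
      · exact Fin.ext h
      · exact (keyA d' d hd' h2 h1 hBe.symm h).elim
  -- card of a piece only depends on the fiber of `cut` in `range n`
  have cardEq : ∀ (C : Fin m → Finset (Fin n)) (hdisj : ∀ i j, i ≠ j → Disjoint (C i) (C j))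
      (hcov : Finset.univ.biUnion C = Finset.univ) (k : Fin m ⊕ Fin m),
      (univ.filter (fun x => cut A B hm (pos C hcov x) = k)).card
        = ((range n).filter (fun d => cut A B hm d = k)).card := by
    intro C hdisj hcov k
    have h1 : (univ.filter (fun x => cut A B hm (pos C hcov x) = k)).image (pos C hcov)
        = (range n).filter (fun d => cut A B hm d = k) := by
      rw [← image_pos C hdisj hcov, Finset.filter_image]
    rw [← h1, card_image_of_injective _ (pos_injective C hdisj hcov)]
  -- pieces are contained in single parts, hence decreasing
  have decPiece : ∀ (C : Fin m → Finset (Fin n)) (hdisj : ∀ i j, i ≠ j → Disjoint (C i) (C j))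
      (hcov : Finset.univ.biUnion C = Finset.univ) (ρ : Equiv.Perm (Fin n))
      (hdec : ∀ i, ∀ p ∈ C i, ∀ q ∈ C i, p < q → ρ q < ρ p)
      (hsame : ∀ d d' : ℕ, d < n → d' < n → cut A B hm d = cut A B hm d' →
        idxOf C hm d = idxOf C hm d') (k : Fin m ⊕ Fin m),
      ∀ p ∈ univ.filter (fun x => cut A B hm (pos C hcov x) = k),
      ∀ q ∈ univ.filter (fun x => cut A B hm (pos C hcov x) = k),
      p < q → (ρ q : ℕ) < (ρ p : ℕ) := by
    intro C hdisj hcov ρ hdec hsame k p hp q hq hpq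
    simp only [mem_filter, mem_univ, true_and] at hp hq
    have hidx : idxOf C hm (pos C hcov p) = idxOf C hm (pos C hcov q) :=
      hsame _ _ (pos_lt C hdisj hcov p) (pos_lt C hdisj hcov q) (hp.trans hq.symm)
    rw [idxOf_pos C hm hcov p, idxOf_pos C hm hcov q] at hidx
    have hmemp : p ∈ C (pt C hcov q) := hidx ▸ pt_mem C hcov p
    exact hdec _ p hmemp q (pt_mem C hcov q) hpq
  set g : Fin (2 * m) ≃ (Fin m ⊕ Fin m) := (finCongr (two_mul m)).trans finSumFinEquiv.symm
    with hg
  refine ⟨fun k => univ.filter (fun x => cut A B hm (pos A hAcov x) = g k),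
    fun k => univ.filter (fun x => cut A B hm (pos B hBcov x) = g k), ?_, ?_, ?_, ?_, ?_⟩
  · intro i j hij
    rw [Finset.disjoint_left]
    intro x hx hx'
    simp only [mem_filter, mem_univ, true_and] at hx hx'
    exact hij (g.injective (hx ▸ hx'))
  · apply Finset.eq_univ_iff_forall.mpr
    intro x
    rw [mem_biUnion]
    exact ⟨g.symm (cut A B hm (pos A hAcov x)), mem_univ _, by
      simp only [mem_filter, mem_univ, true_and, Equiv.apply_symm_apply]⟩
  · intro i j hij
    rw [Finset.disjoint_left]
    intro x hx hx'
    simp only [mem_filter, mem_univ, true_and] at hx hx'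
    exact hij (g.injective (hx ▸ hx'))
  · apply Finset.eq_univ_iff_forall.mpr
    intro x
    rw [mem_biUnion]
    exact ⟨g.symm (cut A B hm (pos B hBcov x)), mem_univ _, by
      simp only [mem_filter, mem_univ, true_and, Equiv.apply_symm_apply]⟩
  · intro k
    apply ordIsoOn_of_dec
    · rw [cardEq A hAdisj hAcov (g k), cardEq B hBdisj hBcov (g k)]
    · exact decPiece A hAdisj hAcov σ hAdec (fun d d' hd hd' h => (key d d' hd hd' h).1) (g k)
    · exact decPiece B hBdisj hBcov π hBdec (fun d d' hd hd' h => (key d d' hd hd' h).2) (g k)
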